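/- Let F be a field, z ≥ 2, and in the setting of the Q̄ matrix, fix 0 ≤ i < j ≤ z−1. After the column operations D̄'_{2i}(b) = D̄_{2i}(b) + γ₁⁽ʲ⁾ D̄_{2i}(b + 2^{j−1}) − D̄_{2j}(φ(i,j,b)) − γ₁⁽ⁱ⁾ D̄_{2j}(φ(i,j,b) + 2^i) for every b with b_{j−1} = 0 (which preserve the determinant), every entry of each modified column D̄'_{2i}(b) is divisible by (λ₁⁽ⁱ⁾ − λ₁⁽ʲ⁾) in the polynomial ring. Consequently (λ₁⁽ⁱ⁾ − λ₁⁽ʲ⁾)^{2^{z−2}} divides det(Q̄) in ℤ[λ's, γ's]. -/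
import Mathlib


namespace Stmt17Aux

def insv (p : ℕ) (c : Bool) (b : ℕ) : ℕ :=
  b / 2 ^ p * 2 ^ (p + 1) + (if c then 2 ^ p else 0) + b % 2 ^ p

lemma insv_eq (p : ℕ) (c : Bool) (b : ℕ) :
    insv p c b = b % 2 ^ p + (2 * (b / 2 ^ p) + (if c then 1 else 0)) * 2 ^ p := by
  cases c <;> simp [insv, pow_succ] <;> ring

lemma insv_div (p : ℕ) (c : Bool) (b : ℕ) :
    insv p c b / 2 ^ p = 2 * (b / 2 ^ p) + (if c then 1 else 0) := by
  rw [insv_eq, Nat.add_mul_div_right _ _ (Nat.two_pow_pos p),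
    Nat.div_eq_of_lt (Nat.mod_lt _ (Nat.two_pow_pos p)), zero_add]

lemma insv_mod (p : ℕ) (c : Bool) (b : ℕ) :
    insv p c b % 2 ^ p = b % 2 ^ p := by
  rw [insv_eq, Nat.add_mul_mod_self_right,
    Nat.mod_eq_of_lt (Nat.mod_lt _ (Nat.two_pow_pos p))]

lemma insv_div2 (p : ℕ) (c : Bool) (b : ℕ) :
    insv p c b / 2 ^ (p + 1) = b / 2 ^ p := by
  rw [show (2:ℕ) ^ (p+1) = 2 ^ p * 2 from pow_succ 2 p, ← Nat.div_div_eq_div_mul, insv_div]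
  cases c <;> simp <;> omega

lemma insv_injective (p : ℕ) (c : Bool) : Function.Injective (insv p c) := by
  intro x y hxy
  have hd := congrArg (· / 2 ^ (p + 1)) hxy
  have hm := congrArg (· % 2 ^ p) hxy
  simp only [insv_div2, insv_mod] at hd hm
  calc x = 2 ^ p * (x / 2 ^ p) + x % 2 ^ p := (Nat.div_add_mod x (2 ^ p)).symm
    _ = 2 ^ p * (y / 2 ^ p) + y % 2 ^ p := by rw [hd, hm]
    _ = y := Nat.div_add_mod y (2 ^ p)

lemma insv_small {p b : ℕ} (hb : b < 2 ^ p) : insv p false b = b := by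
  simp [insv, Nat.div_eq_of_lt hb, Nat.mod_eq_of_lt hb]

lemma testBit_insv (p : ℕ) (c : Bool) (b : ℕ) : (insv p c b).testBit p = c := by
  rw [Nat.testBit_eq_decide_div_mod_eq, insv_div]
  cases c <;> simp <;> omega

lemma insv_lt {p M b : ℕ} (hp : p ≤ M) (hb : b < 2 ^ M) (c : Bool) :
    insv p c b < 2 ^ (M + 1) := by
  have h1 : b / 2 ^ p < 2 ^ (M - p) := by
    rw [Nat.div_lt_iff_lt_mul (Nat.two_pow_pos p), ← pow_add]
    rwa [Nat.sub_add_cancel hp]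
  have h2 : b % 2 ^ p < 2 ^ p := Nat.mod_lt _ (Nat.two_pow_pos p)
  have h3 : (2:ℕ) ^ (M - p) * 2 ^ p = 2 ^ M := by rw [← pow_add, Nat.sub_add_cancel hp]
  have hcb : (if c then 1 else 0) ≤ 1 := by cases c <;> simp
  have h4 : (2 * (b / 2 ^ p) + (if c then 1 else 0) + 1) * 2 ^ p ≤ (2 * 2 ^ (M - p)) * 2 ^ p :=
    Nat.mul_le_mul_right _ (by omega)
  have h5 : (2 * 2 ^ (M - p)) * 2 ^ p = 2 ^ (M + 1) := by rw [mul_assoc, h3, pow_succ]; ring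
  have h6 : (2 * (b / 2 ^ p) + (if c then 1 else 0) + 1) * 2 ^ p
      = (2 * (b / 2 ^ p) + (if c then 1 else 0)) * 2 ^ p + 2 ^ p := by ring
  rw [insv_eq]
  linarith

lemma insv_shift {p M : ℕ} (hp : p ≤ M) (c : Bool) (l h : ℕ) :
    insv p c (l + h * 2 ^ M) = insv p c l + h * 2 ^ (M + 1) := by
  have e : (2:ℕ) ^ M = 2 ^ (M - p) * 2 ^ p := by rw [← pow_add, Nat.sub_add_cancel hp]
  have hdiv : (l + h * 2 ^ M) / 2 ^ p = l / 2 ^ p + h * 2 ^ (M - p) := by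
    rw [e, ← mul_assoc, Nat.add_mul_div_right _ _ (Nat.two_pow_pos p)]
  have hmod : (l + h * 2 ^ M) % 2 ^ p = l % 2 ^ p := by
    rw [e, ← mul_assoc, Nat.add_mul_mod_self_right]
  rw [insv_eq, insv_eq, hdiv, hmod, pow_succ, e]
  ring

lemma testBit_add_pow {m b : ℕ} (hb : b.testBit m = false) :
    (b + 2 ^ m).testBit m = true := by
  rw [Nat.testBit_eq_decide_div_mod_eq] at hb ⊢
  rw [Nat.add_div_right _ (Nat.two_pow_pos m)]
  simp only [decide_eq_false_iff_not, decide_eq_true_eq] at hb ⊢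
  omega

lemma decomp {m b : ℕ} (hb : Nat.testBit b m = false) :
    ∃ l h, b = l + h * 2 ^ (m + 1) ∧ l < 2 ^ m := by
  refine ⟨b % 2 ^ m, b / 2 ^ (m + 1), ?_, Nat.mod_lt _ (Nat.two_pow_pos m)⟩
  have h1 : 2 ^ m * (b / 2 ^ m) + b % 2 ^ m = b := Nat.div_add_mod b (2 ^ m)
  have h2 : b / 2 ^ m % 2 = 0 := by
    rw [Nat.testBit_eq_decide_div_mod_eq] at hb; simpa using hb
  have h3 : b / 2 ^ m / 2 = b / 2 ^ (m + 1) := by rw [Nat.div_div_eq_div_mul, ← pow_succ]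
  have h4 : 2 * (b / 2 ^ m / 2) + b / 2 ^ m % 2 = b / 2 ^ m := Nat.div_add_mod _ 2
  calc b = 2 ^ m * (b / 2 ^ m) + b % 2 ^ m := h1.symm
    _ = 2 ^ m * (2 * (b / 2 ^ (m + 1))) + b % 2 ^ m := by
        rw [show b / 2 ^ m = 2 * (b / 2 ^ (m+1)) from by omega]
    _ = b % 2 ^ m + b / 2 ^ (m + 1) * 2 ^ (m + 1) := by rw [pow_succ]; ring

lemma det_dvd {n R : Type*} [DecidableEq n] [Fintype n] [CommRing R] (d : R)
    (T : Finset n) : ∀ A : Matrix n n R, (∀ c ∈ T, ∀ r, d ∣ A r c) → d ^ T.card ∣ A.det := by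
  classical
  induction T using Finset.induction_on with
  | empty => intro A _; simpa using one_dvd _
  | @insert c T hcT ih =>
    intro A hA
    choose w hw using fun r => hA c (Finset.mem_insert_self c T) r
    have hcol : (fun r => A r c) = d • w := funext fun r => by
      simpa [Pi.smul_apply, smul_eq_mul] using hw r
    have hdet : A.det = d * (A.updateCol c w).det := by
      conv_lhs => rw [← Matrix.updateCol_eq_self A c, hcol]
      exact Matrix.det_updateCol_smul _ c d w
    rw [Finset.card_insert_of_notMem hcT, hdet, pow_succ, mul_comm (d ^ T.card) d]
    refine mul_dvd_mul_left d (ih _ (fun c' hc' r => ?_))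
    rw [Matrix.updateCol_ne (fun h : c' = c => hcT (h ▸ hc'))]
    exact hA c' (Finset.mem_insert_of_mem hc') r

end Stmt17Aux

open Stmt17Aux

/-- The matrix `Q̄` from the proof of Lemma 2, with the entries regarded as multivariate
polynomials over `ℤ`: the variable `((false, c), i)` is `λ₁⁽ⁱ⁾` (for `c = false`) resp.
`λ₂⁽ⁱ⁾` (for `c = true`), and `((true, c), i)` is `γ₁⁽ⁱ⁾` resp. `γ₂⁽ⁱ⁾`.
Columns are indexed by `(a', i)`, where the bit `c` of `a'` at position `i` selects the
block `D̄_{2i}` (`c = false`) or `D̄_{2i+1}` (`c = true`); the column of block `D̄_{2i}`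
with (block-internal) index `b` is the column `(a(i,0,b), i)`. -/
noncomputable def Qbar (z : ℕ) :
    Matrix (Fin (2 ^ z) × Fin z) (Fin (2 ^ z) × Fin z)
      (MvPolynomial ((Bool × Bool) × Fin z) ℤ) := fun row col =>
  let cbit := ((col.1 : ℕ)).testBit (col.2 : ℕ)
  let a0 : ℕ := (col.1 : ℕ) - (if cbit then 2 ^ (col.2 : ℕ) else 0)
  let lamv := MvPolynomial.X (R := ℤ) ((false, cbit), col.2)
  let gamv := MvPolynomial.X (R := ℤ) ((true, cbit), col.2)
  if (row.1 : ℕ) = a0 then lamv ^ (row.2 : ℕ)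
  else if (row.1 : ℕ) = a0 + 2 ^ (col.2 : ℕ) then gamv * lamv ^ (row.2 : ℕ)
  else 0

lemma Qbar_apply (z : ℕ) (r : Fin (2 ^ z) × Fin z) (v : Fin (2 ^ z)) (p : Fin z) (V : ℕ)
    (hv : (v : ℕ) = V) (htb : V.testBit (p : ℕ) = false) :
    Qbar z r (v, p) =
      if (r.1 : ℕ) = V then MvPolynomial.X (R := ℤ) ((false, false), p) ^ (r.2 : ℕ)
      else if (r.1 : ℕ) = V + 2 ^ (p : ℕ) then
        MvPolynomial.X (R := ℤ) ((true, false), p) *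
          MvPolynomial.X (R := ℤ) ((false, false), p) ^ (r.2 : ℕ)
      else 0 := by
  subst hv
  simp only [Qbar, htb]
  norm_num

theorem stmt_17 (z : ℕ) (hz : 2 ≤ z) (i j : Fin z) (hij : (i : ℕ) < (j : ℕ)) :
    -- `ins p c b` inserts the bit `c` at position `p` of `b`;
    -- `del p b` deletes the bit of `b` at position `p`;
    -- `phi b = φ(i,j,b)` deletes bit `j-1` and inserts a `0` at position `i`.
    let ins : ℕ → Bool → ℕ → ℕ := fun p c b =>
      b / 2 ^ p * 2 ^ (p + 1) + (if c then 2 ^ p else 0) + b % 2 ^ p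
    let del : ℕ → ℕ → ℕ := fun p b => b / 2 ^ (p + 1) * 2 ^ p + b % 2 ^ p
    let phi : ℕ → ℕ := fun b => ins (i : ℕ) false (del ((j : ℕ) - 1) b)
    let fin2z : ℕ → Fin (2 ^ z) := fun x => ⟨x % 2 ^ z, Nat.mod_lt _ (Nat.two_pow_pos z)⟩
    let Xv : (Bool × Bool) × Fin z → MvPolynomial ((Bool × Bool) × Fin z) ℤ :=
      MvPolynomial.X
    -- every entry of the modified column `D̄'_{2i}(b)` is divisible by `λ₁⁽ⁱ⁾ − λ₁⁽ʲ⁾`: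
    (∀ b < 2 ^ (z - 1), b.testBit ((j : ℕ) - 1) = false →
      ∀ row : Fin (2 ^ z) × Fin z,
        (Xv ((false, false), i) - Xv ((false, false), j)) ∣
          (Qbar z row (fin2z (ins (i : ℕ) false b), i)
            + Xv ((true, false), j) *
                Qbar z row (fin2z (ins (i : ℕ) false (b + 2 ^ ((j : ℕ) - 1))), i)
            - Qbar z row (fin2z (ins (j : ℕ) false (phi b)), j)
            - Xv ((true, false), i) *
                Qbar z row (fin2z (ins (j : ℕ) false (phi b + 2 ^ (i : ℕ))), j))) ∧
    -- consequently the power `(λ₁⁽ⁱ⁾ − λ₁⁽ʲ⁾)^(2^(z-2))` divides the determinant: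
    (Xv ((false, false), i) - Xv ((false, false), j)) ^ (2 ^ (z - 2)) ∣ (Qbar z).det := by
  intro ins del phi fin2z Xv
  have hins : ∀ p c b, ins p c b = insv p c b := fun _ _ _ => rfl
  have hXv : Xv = MvPolynomial.X := rfl
  have hdel : ∀ p b, del p b = b / 2 ^ (p + 1) * 2 ^ p + b % 2 ^ p := fun _ _ => rfl
  have hfv : ∀ a, a < 2 ^ z → ((fin2z a : Fin (2 ^ z)) : ℕ) = a := fun a ha =>
    Nat.mod_eq_of_lt ha
  set m : ℕ := (j : ℕ) - 1 with hm
  have hjm : (j : ℕ) = m + 1 := by omega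
  have him : (i : ℕ) ≤ m := by omega
  have hmz : m + 2 ≤ z := by have := j.isLt; omega
  have hphi : ∀ b, phi b = insv (i : ℕ) false (del m b) := fun _ => rfl
  -- the arithmetic package
  have pack : ∀ b, b < 2 ^ (z - 1) → Nat.testBit b m = false →
      ∃ V1, insv (i : ℕ) false b = V1
        ∧ insv (i : ℕ) false (b + 2 ^ m) = V1 + 2 ^ (m + 1)
        ∧ insv ((j : ℕ)) false (insv (i : ℕ) false (del m b)) = V1
        ∧ insv ((j : ℕ)) false (insv (i : ℕ) false (del m b) + 2 ^ (i : ℕ)) = V1 + 2 ^ (i : ℕ)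
        ∧ V1 + 2 ^ (i : ℕ) + 2 ^ (m + 1) < 2 ^ z := by
    intro b hb htb
    obtain ⟨l, h, rfl, hl⟩ := decomp htb
    set k := insv (i : ℕ) false l with hk
    have h2i : 0 < 2 ^ (i : ℕ) := Nat.two_pow_pos _
    have hkk : insv (i : ℕ) true l = k + 2 ^ (i : ℕ) := by
      simp only [hk, insv]; norm_num; ring
    have hk2 : k + 2 ^ (i : ℕ) < 2 ^ (m + 1) := hkk ▸ insv_lt him hl true
    have hklt : k < 2 ^ (m + 1) := by omega
    refine ⟨k + h * 2 ^ (m + 2), ?_, ?_, ?_, ?_, ?_⟩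
    · exact insv_shift (him.trans (Nat.le_succ m)) false l h
    · rw [show l + h * 2 ^ (m + 1) + 2 ^ m = (l + 2 ^ m) + h * 2 ^ (m + 1) from by ring,
        insv_shift (him.trans (Nat.le_succ m)) false _ h,
        show l + 2 ^ m = l + 1 * 2 ^ m from by ring, insv_shift him false l 1]
      simp only [pow_succ]; ring
    · have hdelb : del m (l + h * 2 ^ (m + 1)) = l + h * 2 ^ m := by
        have hdiv : (l + h * 2 ^ (m + 1)) / 2 ^ (m + 1) = h := by
          rw [Nat.add_mul_div_right _ _ (Nat.two_pow_pos (m + 1)),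
            Nat.div_eq_of_lt (lt_of_lt_of_le hl (Nat.pow_le_pow_right (by norm_num) (Nat.le_succ m))),
            zero_add]
        have hmod : (l + h * 2 ^ (m + 1)) % 2 ^ m = l := by
          rw [show l + h * 2 ^ (m + 1) = l + (h * 2) * 2 ^ m from by rw [pow_succ]; ring,
            Nat.add_mul_mod_self_right, Nat.mod_eq_of_lt hl]
        rw [hdel, hdiv, hmod]; ring
      rw [hdelb, insv_shift him false l h, hjm, insv_shift (le_refl (m + 1)) false k h,
        insv_small hklt]
    · have hdelb : del m (l + h * 2 ^ (m + 1)) = l + h * 2 ^ m := by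
        have hdiv : (l + h * 2 ^ (m + 1)) / 2 ^ (m + 1) = h := by
          rw [Nat.add_mul_div_right _ _ (Nat.two_pow_pos (m + 1)),
            Nat.div_eq_of_lt (lt_of_lt_of_le hl (Nat.pow_le_pow_right (by norm_num) (Nat.le_succ m))),
            zero_add]
        have hmod : (l + h * 2 ^ (m + 1)) % 2 ^ m = l := by
          rw [show l + h * 2 ^ (m + 1) = l + (h * 2) * 2 ^ m from by rw [pow_succ]; ring,
            Nat.add_mul_mod_self_right, Nat.mod_eq_of_lt hl]
        rw [hdel, hdiv, hmod]; ring
      rw [hdelb, insv_shift him false l h,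
        show k + h * 2 ^ (m + 1) + 2 ^ (i : ℕ) = (k + 2 ^ (i : ℕ)) + h * 2 ^ (m + 1) from by ring,
        hjm, insv_shift (le_refl (m + 1)) false _ h, insv_small hk2]
      simp only [pow_succ]; ring
    · -- bound
      have hzm : (2:ℕ) ^ (z - 1) = 2 ^ (z - m - 2) * 2 ^ (m + 1) := by
        rw [← pow_add]; congr 1; omega
      have hh : h + 1 ≤ 2 ^ (z - m - 2) := by
        by_contra hc
        push_neg at hc
        have h1 : 2 ^ (z - m - 2) * 2 ^ (m + 1) ≤ h * 2 ^ (m + 1) :=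
          Nat.mul_le_mul_right _ (by omega)
        linarith
      have e3 : (2:ℕ) ^ (z - m - 2) * 2 ^ (m + 2) = 2 ^ z := by
        rw [← pow_add]; congr 1; omega
      have e2 : (h + 1) * 2 ^ (m + 2) ≤ 2 ^ (z - m - 2) * 2 ^ (m + 2) :=
        Nat.mul_le_mul_right _ hh
      have e1 : (h + 1) * 2 ^ (m + 2) = h * 2 ^ (m + 2) + 2 ^ (m + 2) := by ring
      have e4 : (2:ℕ) ^ (m + 2) = 2 * 2 ^ (m + 1) := by rw [pow_succ]; ring
      linarith
  -- part 1
  have key : ∀ b, b < 2 ^ (z - 1) → Nat.testBit b m = false →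
      ∀ row : Fin (2 ^ z) × Fin z,
        (MvPolynomial.X (R := ℤ) ((false, false), i) - MvPolynomial.X ((false, false), j)) ∣
          (Qbar z row (fin2z (insv (i : ℕ) false b), i)
            + MvPolynomial.X ((true, false), j) *
                Qbar z row (fin2z (insv (i : ℕ) false (b + 2 ^ m)), i)
            - Qbar z row (fin2z (insv ((j : ℕ)) false (insv (i : ℕ) false (del m b))), j)
            - MvPolynomial.X ((true, false), i) *
                Qbar z row (fin2z (insv ((j : ℕ)) false (insv (i : ℕ) false (del m b) + 2 ^ (i : ℕ))), j)) := by
    intro b hb htb row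
    obtain ⟨V1, hV1, hV2, hV3, hV4, hbound⟩ := pack b hb htb
    have h2i : 0 < 2 ^ (i : ℕ) := Nat.two_pow_pos _
    have h2m : 0 < 2 ^ (m + 1) := Nat.two_pow_pos _
    have him2 : (2:ℕ) ^ (i : ℕ) < 2 ^ (m + 1) := Nat.pow_lt_pow_right (by norm_num) (by omega)
    have hV1z : V1 < 2 ^ z := by omega
    have hV2z : V1 + 2 ^ (m + 1) < 2 ^ z := by omega
    have hV4z : V1 + 2 ^ (i : ℕ) < 2 ^ z := by omega
    have ht1 : V1.testBit (i : ℕ) = false := hV1 ▸ testBit_insv _ _ _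
    have ht2 : (V1 + 2 ^ (m + 1)).testBit (i : ℕ) = false := hV2 ▸ testBit_insv _ _ _
    have ht3 : V1.testBit ((j : ℕ)) = false := hV3 ▸ testBit_insv _ _ _
    have ht4 : (V1 + 2 ^ (i : ℕ)).testBit ((j : ℕ)) = false := hV4 ▸ testBit_insv _ _ _
    rw [hV1, hV2, hV3, hV4]
    rw [Qbar_apply z row _ i V1 (hfv _ hV1z) ht1,
      Qbar_apply z row _ i (V1 + 2 ^ (m + 1)) (hfv _ hV2z) ht2,
      Qbar_apply z row _ j V1 (hfv _ hV1z) ht3,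
      Qbar_apply z row _ j (V1 + 2 ^ (i : ℕ)) (hfv _ hV4z) ht4]
    obtain ⟨q, hq⟩ := sub_dvd_pow_sub_pow (MvPolynomial.X (R := ℤ) ((false, false), i))
      (MvPolynomial.X ((false, false), j)) (row.2 : ℕ)
    simp only [hjm]
    split_ifs <;>
      first
        | (exfalso; omega)
        | exact ⟨q, by linear_combination hq⟩
        | exact ⟨MvPolynomial.X ((true, false), i) * q, by
            linear_combination (MvPolynomial.X (R := ℤ) ((true, false), i)) * hq⟩
        | exact ⟨MvPolynomial.X ((true, false), j) * q, by
            linear_combination (MvPolynomial.X (R := ℤ) ((true, false), j)) * hq⟩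
        | exact ⟨MvPolynomial.X ((true, false), i) * MvPolynomial.X ((true, false), j) * q, by
            linear_combination (MvPolynomial.X (R := ℤ) ((true, false), i) *
              MvPolynomial.X (R := ℤ) ((true, false), j)) * hq⟩
        | exact ⟨0, by ring⟩
  constructor
  · intro b hb htb row
    simpa only [hins, hphi, hXv] using key b hb htb row
  · -- part 2
    simp only [hXv]
    classical
    set S : Finset ℕ := (Finset.range (2 ^ (z - 2))).image (fun y => insv m false y) with hS
    have hSmem : ∀ b ∈ S, b < 2 ^ (z - 1) ∧ Nat.testBit b m = false := by
      intro b hb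
      simp only [hS, Finset.mem_image, Finset.mem_range] at hb
      obtain ⟨y, hy, rfl⟩ := hb
      refine ⟨?_, testBit_insv _ _ _⟩
      have h1 := insv_lt (p := m) (M := z - 2) (by omega) hy false
      have he : z - 2 + 1 = z - 1 := by omega
      rwa [he] at h1
    have hScard : S.card = 2 ^ (z - 2) := by
      rw [hS, Finset.card_image_of_injective _ (insv_injective m false), Finset.card_range]
    have hV1z : ∀ b, b < 2 ^ (z - 1) → insv (i : ℕ) false b < 2 ^ z := by
      intro b hb
      have h1 := insv_lt (p := (i : ℕ)) (M := z - 1) (by omega) hb false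
      have he : z - 1 + 1 = z := by omega
      rwa [he] at h1
    have hcolF_inj : ∀ b, b < 2 ^ (z - 1) → ∀ b', b' < 2 ^ (z - 1) →
        (fin2z (insv (i : ℕ) false b), i) = ((fin2z (insv (i : ℕ) false b'), i) : Fin (2 ^ z) × Fin z) →
        b = b' := by
      intro b hb b' hb' heq
      rw [Prod.mk.injEq] at heq
      have h1 := congrArg Fin.val heq.1
      rw [hfv _ (hV1z b hb), hfv _ (hV1z b' hb')] at h1
      exact insv_injective _ _ h1
    have main : ∀ T : Finset ℕ, T ⊆ S →
        ∃ M : Matrix (Fin (2 ^ z) × Fin z) (Fin (2 ^ z) × Fin z)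
            (MvPolynomial ((Bool × Bool) × Fin z) ℤ),
          M.det = (Qbar z).det ∧
          (∀ col, (∀ b ∈ T, col ≠ (fin2z (insv (i : ℕ) false b), i)) →
            ∀ r, M r col = Qbar z r col) ∧
          (∀ b ∈ T, ∀ r, M r (fin2z (insv (i : ℕ) false b), i) =
            Qbar z r (fin2z (insv (i : ℕ) false b), i)
              + MvPolynomial.X ((true, false), j) *
                  Qbar z r (fin2z (insv (i : ℕ) false (b + 2 ^ m)), i)
              - Qbar z r (fin2z (insv ((j : ℕ)) false (insv (i : ℕ) false (del m b))), j)
              - MvPolynomial.X ((true, false), i) *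
                  Qbar z r (fin2z (insv ((j : ℕ)) false (insv (i : ℕ) false (del m b) + 2 ^ (i : ℕ))), j)) := by
      intro T
      induction T using Finset.induction_on with
      | empty =>
        exact fun _ => ⟨Qbar z, rfl, fun _ _ _ => rfl,
          fun b hb => absurd hb (Finset.notMem_empty b)⟩
      | @insert b T hbT ih =>
        intro hsub
        have hbS : b ∈ S := hsub (Finset.mem_insert_self _ _)
        obtain ⟨hblt, hbtb⟩ := hSmem _ hbS
        obtain ⟨M, hMdet, hMsame, hMnew⟩ := ih (fun x hx => hsub (Finset.mem_insert_of_mem hx))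
        obtain ⟨V1, hV1, hV2, hV3, hV4, hbound⟩ := pack b hblt hbtb
        have h2i : 0 < 2 ^ (i : ℕ) := Nat.two_pow_pos _
        have h2m : 0 < 2 ^ (m + 1) := Nat.two_pow_pos _
        have hV1lt : V1 < 2 ^ z := by omega
        have hV2lt : V1 + 2 ^ (m + 1) < 2 ^ z := by omega
        set c1 : Fin (2 ^ z) × Fin z := (fin2z (insv (i : ℕ) false b), i) with hc1
        set c2 : Fin (2 ^ z) × Fin z := (fin2z (insv (i : ℕ) false (b + 2 ^ m)), i) with hc2
        set c3 : Fin (2 ^ z) × Fin z :=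
          (fin2z (insv ((j : ℕ)) false (insv (i : ℕ) false (del m b))), j) with hc3
        set c4 : Fin (2 ^ z) × Fin z :=
          (fin2z (insv ((j : ℕ)) false (insv (i : ℕ) false (del m b) + 2 ^ (i : ℕ))), j) with hc4
        have hne12 : c1 ≠ c2 := by
          rw [hc1, hc2]
          intro he
          rw [Prod.mk.injEq] at he
          have h2 := congrArg Fin.val he.1
          rw [hV1, hV2, hfv _ hV1lt, hfv _ hV2lt] at h2
          omega
        have hne13 : c1 ≠ c3 := by
          rw [hc1, hc3]
          intro he
          rw [Prod.mk.injEq] at he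
          have h2 := congrArg Fin.val he.2
          exact absurd h2 (by omega)
        have hne14 : c1 ≠ c4 := by
          rw [hc1, hc4]
          intro he
          rw [Prod.mk.injEq] at he
          have h2 := congrArg Fin.val he.2
          exact absurd h2 (by omega)
        have hMc1 : ∀ r, M r c1 = Qbar z r c1 := by
          intro r
          refine hMsame c1 (fun b' hb' he => ?_) r
          rw [hc1] at he
          have hb'lt := (hSmem _ (hsub (Finset.mem_insert_of_mem hb'))).1
          exact hbT (hcolF_inj b hblt b' hb'lt he ▸ hb')
        have hMc2 : ∀ r, M r c2 = Qbar z r c2 := by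
          intro r
          refine hMsame c2 (fun b' hb' he => ?_) r
          obtain ⟨hb'lt, hb'tb⟩ := hSmem _ (hsub (Finset.mem_insert_of_mem hb'))
          rw [hc2, Prod.mk.injEq] at he
          have h2 := congrArg Fin.val he.1
          rw [hV2, hfv _ hV2lt, hfv _ (hV1z b' hb'lt)] at h2
          have h3 : insv (i : ℕ) false (b + 2 ^ m) = insv (i : ℕ) false b' := by rw [hV2, h2]
          have h4 := insv_injective _ _ h3
          rw [← h4] at hb'tb
          rw [testBit_add_pow hbtb] at hb'tb
          exact absurd hb'tb (by simp)
        have hMc3 : ∀ r, M r c3 = Qbar z r c3 := by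
          intro r
          refine hMsame c3 (fun b' hb' he => ?_) r
          rw [hc3, Prod.mk.injEq] at he
          exact absurd (congrArg Fin.val he.2) (by omega)
        have hMc4 : ∀ r, M r c4 = Qbar z r c4 := by
          intro r
          refine hMsame c4 (fun b' hb' he => ?_) r
          rw [hc4, Prod.mk.injEq] at he
          exact absurd (congrArg Fin.val he.2) (by omega)
        refine ⟨M.updateCol c1 (fun r => Qbar z r c1
            + MvPolynomial.X ((true, false), j) * Qbar z r c2
            - Qbar z r c3
            - MvPolynomial.X ((true, false), i) * Qbar z r c4), ?_, ?_, ?_⟩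
        · -- determinant is preserved
          set M1 := M.updateCol c1
            (fun r => M r c1 + (MvPolynomial.X ((true, false), j) :
              MvPolynomial ((Bool × Bool) × Fin z) ℤ) • M r c2) with hM1
          set M2 := M1.updateCol c1
            (fun r => M1 r c1 + (-1 : MvPolynomial ((Bool × Bool) × Fin z) ℤ) • M1 r c3) with hM2
          have e1 : M1.det = M.det := Matrix.det_updateCol_add_smul_self M hne12 _
          have e2 : M2.det = M1.det := Matrix.det_updateCol_add_smul_self M1 hne13 _
          have e3 : (M2.updateCol c1 (fun r => M2 r c1 +
              (-(MvPolynomial.X ((true, false), i)) :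
                MvPolynomial ((Bool × Bool) × Fin z) ℤ) • M2 r c4)).det = M2.det :=
            Matrix.det_updateCol_add_smul_self M2 hne14 _
          have hMeq : M2.updateCol c1 (fun r => M2 r c1 +
              (-(MvPolynomial.X ((true, false), i)) :
                MvPolynomial ((Bool × Bool) × Fin z) ℤ) • M2 r c4) =
              M.updateCol c1 (fun r => Qbar z r c1
                + MvPolynomial.X ((true, false), j) * Qbar z r c2
                - Qbar z r c3
                - MvPolynomial.X ((true, false), i) * Qbar z r c4) := by
            ext r col
            by_cases hcol : col = c1
            · subst hcol
              simp only [hM2, hM1, Matrix.updateCol_self,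
                Matrix.updateCol_ne hne13.symm, Matrix.updateCol_ne hne14.symm,
                hMc1, hMc2, hMc3, hMc4, smul_eq_mul]
              ring
            · simp only [hM2, hM1, Matrix.updateCol_ne hcol]
          rw [← hMeq, e3, e2, e1, hMdet]
        · -- untouched columns
          intro col hcol r
          have hcolc1 : col ≠ c1 := by rw [hc1]; exact hcol b (Finset.mem_insert_self _ _)
          rw [Matrix.updateCol_ne hcolc1]
          exact hMsame col (fun b' hb' => hcol b' (Finset.mem_insert_of_mem hb')) r
        · -- modified columns
          intro b' hb' r
          rcases Finset.mem_insert.mp hb' with rfl | hb'T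
          · rw [← hc1, ← hc2, ← hc3, ← hc4, Matrix.updateCol_self]
          · have hne : (fin2z (insv (i : ℕ) false b'), i) ≠ c1 := by
              rw [hc1]
              intro he
              have hb'lt := (hSmem _ (hsub (Finset.mem_insert_of_mem hb'T))).1
              exact hbT (hcolF_inj b' hb'lt b hblt he ▸ hb'T)
            rw [Matrix.updateCol_ne hne]
            exact hMnew b' hb'T r
    obtain ⟨M, hMdet, -, hMnew⟩ := main S (subset_refl _)
    rw [← hMdet]
    have hinj2 : Set.InjOn
        (fun b => ((fin2z (insv (i : ℕ) false b), i) : Fin (2 ^ z) × Fin z)) S := by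
      intro a ha b hb hab
      exact hcolF_inj a (hSmem _ ha).1 b (hSmem _ hb).1 hab
    have hcols : ∀ c ∈ S.image
        (fun b => ((fin2z (insv (i : ℕ) false b), i) : Fin (2 ^ z) × Fin z)), ∀ r,
        (MvPolynomial.X (R := ℤ) ((false, false), i) - MvPolynomial.X ((false, false), j)) ∣
          M r c := by
      intro c hc r
      obtain ⟨b, hbS, rfl⟩ := Finset.mem_image.mp hc
      rw [hMnew b hbS r]
      exact key b (hSmem _ hbS).1 (hSmem _ hbS).2 r
    have hdvd := det_dvd
      (MvPolynomial.X (R := ℤ) ((false, false), i) - MvPolynomial.X ((false, false), j))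
      (S.image (fun b => ((fin2z (insv (i : ℕ) false b), i) : Fin (2 ^ z) × Fin z))) M hcols
    rwa [Finset.card_image_of_injOn hinj2, hScard] at hdvd
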